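/- The master quad-equation of type I, (δ−βγ)λ(XY+UV) + βδ(λ²−γ)XU + (βλ²−δ)XV + γ(βλ²−δ)YU + (λ²−γ)YV = 0, where (X,U,Y,V) = (e^{x_k}, Φ̃_{k+1}, e^{x̃_k}, Ψ̃_k), is equivalent to its three-leg form centered at x_k: ((e^{x̃_k}+βe^{x_k})/(γe^{x̃_k}+δe^{x_k}))·((δe^{x_k}+λΨ̃_k)/(βλe^{x_k}+Ψ̃_k))·((λe^{x_k}−γΦ̃_{k+1})/(e^{x_k}−λΦ̃_{k+1})) = 1, whenever all denominators are nonzero. -/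
import Mathlib

/-- The master quad-equation of type I is equivalent to its three-leg form
centered at `x_k`. Here `Ex = e^{x_k}`, `Et = e^{x̃_k}`, `Ψ = Ψ̃_k`,
`Φ = Φ̃_{k+1}`. -/
theorem master_typeI_three_leg_form
    (β γ δ lam Ex Et Ψ Φ : ℂ)
    (hEx : Ex ≠ 0)
    (hd1 : γ * Et + δ * Ex ≠ 0)
    (hd2 : β * lam * Ex + Ψ ≠ 0)
    (hd3 : Ex - lam * Φ ≠ 0) :
    ((δ - β * γ) * lam * (Ex * Et + Φ * Ψ) + β * δ * (lam ^ 2 - γ) * Ex * Φ +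
        (β * lam ^ 2 - δ) * Ex * Ψ + γ * (β * lam ^ 2 - δ) * Et * Φ +
        (lam ^ 2 - γ) * Et * Ψ = 0)
      ↔
    ((Et + β * Ex) / (γ * Et + δ * Ex)) *
    ((δ * Ex + lam * Ψ) / (β * lam * Ex + Ψ)) *
    ((lam * Ex - γ * Φ) / (Ex - lam * Φ)) = 1 := by
  rw [div_mul_div_comm, div_mul_div_comm,
    div_eq_one_iff_eq (mul_ne_zero (mul_ne_zero hd1 hd2) hd3)]
  constructor
  · intro h
    linear_combination Ex * h
  · intro h
    have h2 : Ex * ((δ - β * γ) * lam * (Ex * Et + Φ * Ψ) +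
        β * δ * (lam ^ 2 - γ) * Ex * Φ + (β * lam ^ 2 - δ) * Ex * Ψ +
        γ * (β * lam ^ 2 - δ) * Et * Φ + (lam ^ 2 - γ) * Et * Ψ) = 0 := by
      linear_combination h
    exact (mul_eq_zero.mp h2).resolve_left hEx
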